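/- Let t, r, φ, z : ℝ → ℝ be a geodesic of Gödel's universe, and fix u₀ ∈ ℝ. Set A = P_{2,0}(u₀) and B = P_{0,1}(u₀). If A ≥ 0 and B ≤ 0, then t'(u) ≥ 0 for every u ∈ ℝ. -/
import Mathlib


open Real

/-- A function is twice differentiable (everywhere on ℝ). -/
def TwiceDiff (f : ℝ → ℝ) : Prop :=
  Differentiable ℝ f ∧ Differentiable ℝ (deriv f)

/-- The four geodesic differential equations of Gödel's universe in
cylindrical coordinates. -/
def GodelGeodesicEqns (t r φ z : ℝ → ℝ) : Prop :=
  ∀ u : ℝ,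
    (deriv (deriv t) u + 4 * Real.tanh (r u) * deriv t u * deriv r u
      + 2 * Real.sqrt 2 * (Real.sinh (r u) ^ 3 / Real.cosh (r u)) * deriv φ u * deriv r u = 0)
    ∧ (deriv (deriv r) u
      + 2 * Real.sqrt 2 * Real.sinh (r u) * Real.cosh (r u) * deriv t u * deriv φ u
      + Real.sinh (r u) * Real.cosh (r u) * (2 * Real.cosh (r u) ^ 2 - 3) * (deriv φ u) ^ 2 = 0)
    ∧ (deriv (deriv φ) u * Real.sinh (r u) * Real.cosh (r u)
      - 2 * Real.sqrt 2 * deriv t u * deriv r u + 2 * deriv φ u * deriv r u = 0)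
    ∧ (deriv (deriv z) u = 0)

/-- The conserved momentum quantity `P_{ρ₁,ρ₂}` along a curve. -/
noncomputable def godelP (t r φ : ℝ → ℝ) (ρ₁ ρ₂ : ℝ) (u : ℝ) : ℝ :=
  (ρ₂ + ρ₁ * Real.cosh (r u) ^ 2 / 2) * deriv t u
    + ((ρ₁ * Real.cosh (r u) ^ 2 + 4 * ρ₂) * Real.sinh (r u) ^ 2 / (2 * Real.sqrt 2)) * deriv φ u

/-- The conserved quantity `C₁` along a curve. -/
noncomputable def godelC1 (t r φ : ℝ → ℝ) (u : ℝ) : ℝ :=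
  -(Real.sqrt 2) * Real.cos (φ u) * Real.sinh (2 * r u) * deriv t u
    + Real.sin (φ u) * deriv r u
    - Real.cos (φ u) * (Real.cosh (2 * r u) - 2) * Real.sinh (2 * r u) / 2 * deriv φ u

/-- The conserved quantity `C₂` along a curve. -/
noncomputable def godelC2 (t r φ : ℝ → ℝ) (u : ℝ) : ℝ :=
  Real.sqrt 2 * Real.sin (φ u) * Real.sinh (2 * r u) * deriv t u
    + Real.cos (φ u) * deriv r u
    + Real.sin (φ u) * (Real.cosh (2 * r u) - 2) * Real.sinh (2 * r u) / 2 * deriv φ u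


private lemma godelP_hasDerivAt (t r φ z : ℝ → ℝ)
    (ht : TwiceDiff t) (hr : TwiceDiff r) (hφ : TwiceDiff φ)
    (hrpos : ∀ u, 0 < r u)
    (hgeo : GodelGeodesicEqns t r φ z) (ρ₁ ρ₂ : ℝ) (u : ℝ) :
    HasDerivAt (godelP t r φ ρ₁ ρ₂) 0 u := by
  have hrd : HasDerivAt r (deriv r u) u := (hr.1 u).hasDerivAt
  have hc : HasDerivAt (fun x => Real.cosh (r x)) (Real.sinh (r u) * deriv r u) u := hrd.cosh
  have hs : HasDerivAt (fun x => Real.sinh (r x)) (Real.cosh (r u) * deriv r u) u := hrd.sinh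
  have hc2 := hc.pow 2
  have hs2 := hs.pow 2
  have hT : HasDerivAt (deriv t) (deriv (deriv t) u) u := (ht.2 u).hasDerivAt
  have hP : HasDerivAt (deriv φ) (deriv (deriv φ) u) u := (hφ.2 u).hasDerivAt
  have H := (((hasDerivAt_const u ρ₂).add ((hc2.const_mul ρ₁).div_const 2)).mul hT).add
    (((((hc2.const_mul ρ₁).add_const (4 * ρ₂)).mul hs2).div_const (2 * Real.sqrt 2)).mul hP)
  have hcpos := Real.cosh_pos (r u)
  have hspos : 0 < Real.sinh (r u) := by
    rw [← Real.sinh_zero]; exact Real.sinh_lt_sinh.2 (hrpos u)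
  have hcne : Real.cosh (r u) ≠ 0 := ne_of_gt hcpos
  have hsne : Real.sinh (r u) ≠ 0 := ne_of_gt hspos
  have hq : Real.sqrt 2 ^ 2 = 2 := Real.sq_sqrt (by norm_num)
  have hcsq : Real.cosh (r u) ^ 2 = Real.sinh (r u) ^ 2 + 1 := by
    nlinarith [Real.cosh_sq_sub_sinh_sq (r u)]
  have hkey : ∀ x : ℝ, x / (2 * Real.sqrt 2) = x * Real.sqrt 2 / 4 := by
    intro x
    rw [div_eq_div_iff (by positivity) (by norm_num : (4:ℝ) ≠ 0)]
    linear_combination (-2 * x) * hq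
  have hD0 : (0 + ρ₁ * ((2 : ℕ) * Real.cosh (r u) ^ (2 - 1) * (Real.sinh (r u) * deriv r u)) / 2) *
        deriv t u + (ρ₂ + ρ₁ * Real.cosh (r u) ^ 2 / 2) * deriv (deriv t) u +
      ((ρ₁ * ((2 : ℕ) * Real.cosh (r u) ^ (2 - 1) * (Real.sinh (r u) * deriv r u)) *
          Real.sinh (r u) ^ 2 + (ρ₁ * Real.cosh (r u) ^ 2 + 4 * ρ₂) *
          ((2 : ℕ) * Real.sinh (r u) ^ (2 - 1) * (Real.cosh (r u) * deriv r u))) / (2 * Real.sqrt 2) *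
        deriv φ u + (ρ₁ * Real.cosh (r u) ^ 2 + 4 * ρ₂) * Real.sinh (r u) ^ 2 / (2 * Real.sqrt 2) *
        deriv (deriv φ) u) = 0 := by
    obtain ⟨e1, e2, e3, e4⟩ := hgeo u
    rw [Real.tanh_eq_sinh_div_cosh] at e1
    have e1' : deriv (deriv t) u * Real.cosh (r u)
        + 4 * Real.sinh (r u) * deriv t u * deriv r u
        + 2 * Real.sqrt 2 * Real.sinh (r u) ^ 3 * deriv φ u * deriv r u = 0 := by
      field_simp at e1
      linear_combination e1
    rw [hkey, hkey]
    set q := Real.sqrt 2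
    set s := Real.sinh (r u)
    set c := Real.cosh (r u)
    set T := deriv t u
    set R := deriv r u
    set P := deriv φ u
    set T2 := deriv (deriv t) u
    set P2 := deriv (deriv φ) u
    have hmul : ((0 + ρ₁ * ((2 : ℕ) * c ^ (2 - 1) * (s * R)) / 2) * T
        + (ρ₂ + ρ₁ * c ^ 2 / 2) * T2
        + ((ρ₁ * ((2 : ℕ) * c ^ (2 - 1) * (s * R)) * s ^ 2
            + (ρ₁ * c ^ 2 + 4 * ρ₂) * ((2 : ℕ) * s ^ (2 - 1) * (c * R))) * q / 4 * P
          + (ρ₁ * c ^ 2 + 4 * ρ₂) * s ^ 2 * q / 4 * P2)) * (s * c) = 0 := by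
      linear_combination ((ρ₂ + ρ₁ * c ^ 2 / 2) * s) * e1'
        + (q / 4 * (ρ₁ * c ^ 2 + 4 * ρ₂) * s ^ 2) * e3
        + (q / 2 * s ^ 2 * P * R * (ρ₁ * c ^ 2 + 4 * ρ₂)) * hcsq
        + ((1 / 2) * (ρ₁ * c ^ 2 + 4 * ρ₂) * s ^ 2 * T * R) * hq
    have hsc : s * c ≠ 0 := mul_ne_zero hsne hcne
    exact (mul_eq_zero.mp hmul).resolve_right hsc
  exact hD0 ▸ H

private lemma godelP_const (t r φ z : ℝ → ℝ)
    (ht : TwiceDiff t) (hr : TwiceDiff r) (hφ : TwiceDiff φ)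
    (hrpos : ∀ u, 0 < r u)
    (hgeo : GodelGeodesicEqns t r φ z) (ρ₁ ρ₂ : ℝ) (u v : ℝ) :
    godelP t r φ ρ₁ ρ₂ u = godelP t r φ ρ₁ ρ₂ v :=
  is_const_of_deriv_eq_zero
    (fun x => (godelP_hasDerivAt t r φ z ht hr hφ hrpos hgeo ρ₁ ρ₂ x).differentiableAt)
    (fun x => (godelP_hasDerivAt t r φ z ht hr hφ hrpos hgeo ρ₁ ρ₂ x).deriv) u v

/-- If `A = P_{2,0}(u₀) ≥ 0` and `B = P_{0,1}(u₀) ≤ 0`, then `t' ≥ 0`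
everywhere along the geodesic. -/
theorem godel_tdot_nonneg (t r φ z : ℝ → ℝ)
    (ht : TwiceDiff t) (hr : TwiceDiff r) (hφ : TwiceDiff φ) (hz : TwiceDiff z)
    (hrpos : ∀ u, 0 < r u)
    (hgeo : GodelGeodesicEqns t r φ z)
    (u₀ : ℝ) (A B : ℝ)
    (hA : A = godelP t r φ 2 0 u₀) (hB : B = godelP t r φ 0 1 u₀)
    (hA0 : 0 ≤ A) (hB0 : B ≤ 0) :
    ∀ u : ℝ, 0 ≤ deriv t u := by
  intro u
  have hAu : godelP t r φ 2 0 u = A := by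
    rw [hA]; exact godelP_const t r φ z ht hr hφ hrpos hgeo 2 0 u u₀
  have hBu : godelP t r φ 0 1 u = B := by
    rw [hB]; exact godelP_const t r φ z ht hr hφ hrpos hgeo 0 1 u u₀
  unfold godelP at hAu hBu
  have hcpos := Real.cosh_pos (r u)
  have hqpos : (0 : ℝ) < Real.sqrt 2 := Real.sqrt_pos.2 (by norm_num)
  have h1 : (1 : ℝ) ≤ Real.cosh (r u) := Real.one_le_cosh (r u)
  have key : Real.cosh (r u) ^ 2 / 2 * deriv t u
      = A - Real.cosh (r u) ^ 2 / 2 * B := by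
    linear_combination hAu - (Real.cosh (r u) ^ 2 / 2) * hBu
  have h2 : 0 ≤ Real.cosh (r u) ^ 2 / 2 * deriv t u := by
    rw [key]
    have h3 : 0 ≤ Real.cosh (r u) ^ 2 / 2 * (-B) :=
      mul_nonneg (by positivity) (neg_nonneg.2 hB0)
    linarith
  by_contra hneg
  push_neg at hneg
  have hk : (0:ℝ) < Real.cosh (r u) ^ 2 / 2 := by positivity
  nlinarith [mul_pos hk (neg_pos.2 hneg)]
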